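/- Let P ⊆ R^n_{≥0} be a convex set of feasible utility vectors and let u* ∈ P maximize Σ_i ln(U_i) over P, with u*_i > 0 for all i. Then u* is a core outcome: there is no subset S ⊆ [n] and vector d ∈ P such that (|S|/n)·d_i ≥ u*_i for all i ∈ S with at least one strict inequality. -/

import Mathlib

open Real Filter Set Topology

/-- The fractional Max Nash Welfare solution lies in the core: if `u*` maximizes
`∑ i, log U_i` over a convex set `P` of nonnegative utility vectors with
`u*_i > 0` for all `i`, then no coalition `S` and `d ∈ P` satisfy
`(|S|/n)·d_i ≥ u*_i` for all `i ∈ S` with one strict inequality. -/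
theorem mnw_in_core
    {n : ℕ} (P : Set (Fin n → ℝ)) (hconv : Convex ℝ P)
    (hnonneg : ∀ U ∈ P, ∀ i, 0 ≤ U i)
    (ustar : Fin n → ℝ) (hmem : ustar ∈ P) (hpos : ∀ i, 0 < ustar i)
    (hmax : ∀ U ∈ P, ∑ i, Real.log (U i) ≤ ∑ i, Real.log (ustar i)) :
    ¬ ∃ (S : Finset (Fin n)) (d : Fin n → ℝ), d ∈ P ∧
        (∀ i ∈ S, ((S.card : ℝ) / n) * d i ≥ ustar i) ∧
        (∃ i ∈ S, ((S.card : ℝ) / n) * d i > ustar i) := by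
  rintro ⟨S, d, hd, hwk, i0, hi0S, hstrict⟩
  have hd0 : ∀ i, 0 ≤ d i := hnonneg d hd
  have hnpos : 0 < (n : ℝ) := by exact_mod_cast i0.pos
  have hcpos : 0 < (S.card : ℝ) := by
    exact_mod_cast Finset.card_pos.mpr ⟨i0, hi0S⟩
  -- Key first-order optimality condition: ∑ i, d i / ustar i ≤ n
  have key : ∑ i, d i / ustar i ≤ (n : ℝ) := by
    set g : ℝ → ℝ := fun t => ∑ i, (d i - ustar i) / ((1 - t) * ustar i + t * d i)
      with hgdef
    have hcont : ContinuousAt g 0 := by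
      apply tendsto_finset_sum
      intro i _
      have h : ContinuousAt (fun t : ℝ => (d i - ustar i) /
          ((1 - t) * ustar i + t * d i)) 0 := by
        apply ContinuousAt.div continuousAt_const
        · exact (((continuous_const.sub continuous_id).mul continuous_const).add
            (continuous_id.mul continuous_const)).continuousAt
        · simpa using (hpos i).ne'
      simpa using h.tendsto
    have hev : ∀ᶠ t in 𝓝[>] (0:ℝ), g t ≤ 0 := by
      filter_upwards [Ioo_mem_nhdsGT_of_mem
        (show (0:ℝ) ∈ Set.Ico (0:ℝ) 1 by norm_num)] with t ht
      set v : Fin n → ℝ := fun i => (1 - t) * ustar i + t * d i with hvdef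
      have hvP : v ∈ P := hconv hmem hd (by linarith [ht.2]) ht.1.le (by ring)
      have hvpos : ∀ i, 0 < v i := by
        intro i
        have h1 := hd0 i; have h2 := hpos i
        have hv : v i = (1 - t) * ustar i + t * d i := rfl
        rw [hv]
        nlinarith [ht.1, ht.2]
      have hterm : ∀ i, (v i - ustar i) / v i ≤ Real.log (v i) - Real.log (ustar i) := by
        intro i
        have h1 : Real.log (ustar i / v i) ≤ ustar i / v i - 1 :=
          Real.log_le_sub_one_of_pos (div_pos (hpos i) (hvpos i))
        rw [Real.log_div (hpos i).ne' (hvpos i).ne'] at h1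
        have h2 : ustar i / v i - 1 = (ustar i - v i) / v i := by
          rw [sub_div, div_self (hvpos i).ne']
        have h3 : (v i - ustar i) / v i = -((ustar i - v i) / v i) := by ring
        rw [h3]; linarith [h1, h2 ▸ h1]
      have hsum : ∑ i, ((v i - ustar i) / v i) ≤ 0 := by
        calc ∑ i, ((v i - ustar i) / v i)
            ≤ ∑ i, (Real.log (v i) - Real.log (ustar i)) :=
              Finset.sum_le_sum fun i _ => hterm i
          _ = ∑ i, Real.log (v i) - ∑ i, Real.log (ustar i) := by
              rw [Finset.sum_sub_distrib]
          _ ≤ 0 := by linarith [hmax v hvP]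
      have htg : t * g t = ∑ i, ((v i - ustar i) / v i) := by
        rw [hgdef]
        simp only [Finset.mul_sum]
        refine Finset.sum_congr rfl fun i _ => ?_
        have : v i - ustar i = t * (d i - ustar i) := by simp only [hvdef]; ring
        rw [this, mul_div_assoc]
      have : t * g t ≤ t * 0 := by rw [mul_zero]; linarith [htg ▸ hsum]
      exact le_of_mul_le_mul_left this ht.1
    have hle : g 0 ≤ 0 :=
      le_of_tendsto (hcont.tendsto.mono_left nhdsWithin_le_nhds) hev
    have hg0 : g 0 = ∑ i, (d i / ustar i - 1) := by
      rw [hgdef]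
      refine Finset.sum_congr rfl fun i _ => ?_
      have := (hpos i).ne'
      rw [sub_zero, one_mul, zero_mul, add_zero, sub_div, div_self this]
    rw [hg0, Finset.sum_sub_distrib, Finset.sum_const, Finset.card_univ,
      Fintype.card_fin, nsmul_eq_mul, mul_one] at hle
    linarith
  -- Derive the contradiction
  have hlow : ∀ i ∈ S, (n : ℝ) / S.card ≤ d i / ustar i := by
    intro i hi
    have h := hwk i hi
    rw [ge_iff_le, div_mul_eq_mul_div, le_div_iff₀ hnpos] at h
    rw [div_le_div_iff₀ hcpos (hpos i)]
    nlinarith [h]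
  have hlt : (n : ℝ) / S.card < d i0 / ustar i0 := by
    rw [gt_iff_lt, div_mul_eq_mul_div, lt_div_iff₀ hnpos] at hstrict
    rw [div_lt_div_iff₀ hcpos (hpos i0)]
    nlinarith [hstrict]
  have hsumS : (n : ℝ) < ∑ i ∈ S, d i / ustar i := by
    have h := Finset.sum_lt_sum hlow ⟨i0, hi0S, hlt⟩
    have heq : ∑ _i ∈ S, (n : ℝ) / S.card = (n : ℝ) := by
      rw [Finset.sum_const, nsmul_eq_mul, mul_div_cancel₀ _ hcpos.ne']
    linarith [heq ▸ h]
  have hsub : ∑ i ∈ S, d i / ustar i ≤ ∑ i, d i / ustar i :=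
    Finset.sum_le_sum_of_subset_of_nonneg (Finset.subset_univ S)
      (fun i _ _ => div_nonneg (hd0 i) (hpos i).le)
  linarith
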